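/- Let D be a triangulated category carrying both a baric structure (D_{≤w}, D_{≥w}) and a t-structure (D^{≤n}, D^{≥n}) such that the baric truncation β_{≥w} is left t-exact and the t-truncation τ_{≥n} is 'right baryexact' (preserves D_{≤w}). Define D^{[≤n]}_{≤w} = (D^{≤n} * D_{≤w-1}) ∩ D_{≤w} and D^{[≥n]}_{≥w} = D^{≥n} ∩ D_{≥w}, and let P_w = D_{≤w} ∩ D_{≥w} be the category of pure objects of degree w. Then (D^{[≤0]}_{≤w} ∩ P_w, D^{[≥0]}_{≥w} ∩ P_w) is a t-structure on the triangulated category P_w. -/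

import Mathlib

open CategoryTheory Limits Pretriangulated Triangulated

universe v u

variable {D : Type u} [Category.{v} D] [HasZeroObject D] [Preadditive D] [HasShift D ℤ]
  [∀ n : ℤ, (shiftFunctor D n).Additive] [Pretriangulated D] [HasBinaryBiproducts D]

/-- A (bounded) baric structure on a triangulated category `D`. -/
structure BaricStructure (D : Type u) [Category.{v} D] [HasZeroObject D] [Preadditive D]
    [HasShift D ℤ] [∀ n : ℤ, (shiftFunctor D n).Additive] [Pretriangulated D]
    [HasBinaryBiproducts D] where
  le : ℤ → Set D
  ge : ℤ → Set D
  le_iso {w : ℤ} {X Y : D} (e : X ≅ Y) : X ∈ le w → Y ∈ le w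
  ge_iso {w : ℤ} {X Y : D} (e : X ≅ Y) : X ∈ ge w → Y ∈ ge w
  le_zero (w : ℤ) (Z : D) (hZ : IsZero Z) : Z ∈ le w
  ge_zero (w : ℤ) (Z : D) (hZ : IsZero Z) : Z ∈ ge w
  le_shift (w : ℤ) (n : ℤ) (X : D) : X ∈ le w → X⟦n⟧ ∈ le w
  ge_shift (w : ℤ) (n : ℤ) (X : D) : X ∈ ge w → X⟦n⟧ ∈ ge w
  le_ext₂ (w : ℤ) (T : Triangle D) (hT : T ∈ distTriang D) :
    T.obj₁ ∈ le w → T.obj₃ ∈ le w → T.obj₂ ∈ le w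
  ge_ext₂ (w : ℤ) (T : Triangle D) (hT : T ∈ distTriang D) :
    T.obj₁ ∈ ge w → T.obj₃ ∈ ge w → T.obj₂ ∈ ge w
  le_summand (w : ℤ) (X Y : D) : (X ⊞ Y) ∈ le w → X ∈ le w
  ge_summand (w : ℤ) (X Y : D) : (X ⊞ Y) ∈ ge w → X ∈ ge w
  le_mono (w : ℤ) : le w ⊆ le (w + 1)
  ge_antitone (w : ℤ) : ge (w + 1) ⊆ ge w
  hom_zero {w : ℤ} {A B : D} (hA : A ∈ le w) (hB : B ∈ ge (w + 1)) (f : A ⟶ B) : f = 0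
  exists_triangle (X : D) (w : ℤ) : ∃ (A B : D) (f : A ⟶ X) (g : X ⟶ B)
    (h : B ⟶ A⟦(1 : ℤ)⟧), (Triangle.mk f g h ∈ distTriang D) ∧ A ∈ le w ∧ B ∈ ge (w + 1)
  bounded (X : D) : ∃ v w : ℤ, X ∈ ge v ∧ X ∈ le w

/-- The `*` operation on classes of objects of a triangulated category (BBD 1.3.9):
`X ∈ S * T` iff there is a distinguished triangle `A → X → B →` with `A ∈ S`, `B ∈ T`. -/
def starOp (S T : Set D) : Set D :=
  { X | ∃ (A B : D) (f : A ⟶ X) (g : X ⟶ B) (h : B ⟶ A⟦(1 : ℤ)⟧),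
      (Triangle.mk f g h ∈ distTriang D) ∧ A ∈ S ∧ B ∈ T }

lemma my_yoneda_exact₁ (T : Triangle D) (hT : T ∈ distTriang D) {Z : D}
    (f : T.obj₁ ⟶ Z) (hf : T.mor₃ ≫ f⟦(1:ℤ)⟧' = 0) : ∃ g : T.obj₂ ⟶ Z, f = T.mor₁ ≫ g := by
  obtain ⟨g, hg⟩ := Triangle.yoneda_exact₂ _ (inv_rot_of_distTriang _ hT) f (by
    change (-T.mor₃⟦(-1 : ℤ)⟧' ≫ (shiftEquiv D (1 : ℤ)).unitIso.inv.app _) ≫ f = 0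
    have hnat := (shiftEquiv D (1:ℤ)).unitIso.inv.naturality f
    dsimp at hnat
    rw [Preadditive.neg_comp]
    erw [Category.assoc, ← hnat, ← Functor.map_comp_assoc, hf, Functor.map_zero, zero_comp, neg_zero])
  exact ⟨g, hg⟩

lemma my_tzero (t : TStructure D) {X Y : D} (f : X ⟶ Y) (a c : ℤ) (h : a < c)
    (hX : t.le a X) (hY : t.ge c Y) : f = 0 := by
  have hX' : t.le 0 (X⟦a⟧) := t.le_shift a a 0 (by omega) X hX
  have hY' : t.ge (c - a) (Y⟦a⟧) := t.ge_shift c a (c - a) (by omega) Y hY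
  have hY'' : t.ge 1 (Y⟦a⟧) := t.ge_antitone (show (1:ℤ) ≤ c - a by omega) _ hY'
  have hz : f⟦a⟧' = 0 := t.zero' _ hX' hY''
  apply (shiftFunctor D a).map_injective
  rw [hz, Functor.map_zero]

/-- Let `D` carry a baric structure and a t-structure such that the baric
truncations `β_{≥w}` are left t-exact and the t-truncations `τ_{≥n}` are right baryexact.
With `D^{[≤n]}_{≤w} = (D^{≤n} * D_{≤w-1}) ∩ D_{≤w}` and `D^{[≥n]}_{≥w} = D^{≥n} ∩ D_{≥w}`,
and `P_w = D_{≤w} ∩ D_{≥w}` the category of pure objects of baric degree `w`, the pair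
`(D^{[≤0]}_{≤w} ∩ P_w, D^{[≥0]}_{≥w} ∩ P_w)` is a t-structure on `P_w` (nesting,
Hom-vanishing, and existence of truncation triangles inside `P_w`). -/
theorem purified_standard_tStructure
    (b : BaricStructure D) (t : TStructure D) (w : ℤ)
    -- `β_{≥ w'}` is left t-exact, for every `w'` (triangle formulation): in any baric
    -- truncation triangle of an object of `D^{≥ n}`, the third term is again in `D^{≥ n}`
    (hbeta : ∀ (w' n : ℤ) (T : Triangle D), T ∈ (distTriang D) → T.obj₁ ∈ b.le w' →
      T.obj₃ ∈ b.ge (w' + 1) → t.ge n T.obj₂ → t.ge n T.obj₃)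
    -- `τ_{≥ n}` is right baryexact: in any t-truncation triangle of an object of `D_{≤ w'}`,
    -- the third term is again in `D_{≤ w'}`
    (htau : ∀ (w' n : ℤ) (T : Triangle D), T ∈ (distTriang D) → t.le (n - 1) T.obj₁ →
      t.ge n T.obj₃ → T.obj₂ ∈ b.le w' → T.obj₃ ∈ b.le w')
    -- notation: the two halves of the purified standard t-structure on `P_w`
    (P Lp Gp : ℤ → Set D)
    (hP : ∀ _n : ℤ, P _n = b.le w ∩ b.ge w)
    (hLp : ∀ n : ℤ, Lp n =
      (starOp ({X | t.le n X}) (b.le (w - 1)) ∩ b.le w) ∩ (b.le w ∩ b.ge w))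
    (hGp : ∀ n : ℤ, Gp n = ({X | t.ge n X} ∩ b.ge w) ∩ (b.le w ∩ b.ge w)) :
    -- (i) nesting
    (∀ n : ℤ, Lp n ⊆ Lp (n + 1)) ∧ (∀ n : ℤ, Gp (n + 1) ⊆ Gp n) ∧
    -- (ii) Hom-vanishing
    (∀ A ∈ Lp 0, ∀ B ∈ Gp 1, ∀ f : A ⟶ B, f = 0) ∧
    -- (iii) truncation triangles, within the pure category `P_w`
    (∀ X ∈ b.le w ∩ b.ge w, ∃ (A B : D) (f : A ⟶ X) (g : X ⟶ B) (h : B ⟶ A⟦(1 : ℤ)⟧),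
      (Triangle.mk f g h ∈ distTriang D) ∧ A ∈ Lp 0 ∧ B ∈ Gp 1) := by

  have hwe : w - 1 + 1 = w := by omega
  refine ⟨?_, ?_, ?_, ?_⟩
  · -- nesting for Lp
    intro n X hX
    rw [hLp] at hX ⊢
    obtain ⟨⟨⟨A, B, f, g, h, hT, hA, hB⟩, hXle⟩, hXP⟩ := hX
    exact ⟨⟨⟨A, B, f, g, h, hT, t.le_monotone (by omega) _ hA, hB⟩, hXle⟩, hXP⟩
  · -- nesting for Gp
    intro n X hX
    rw [hGp] at hX ⊢
    obtain ⟨⟨hX1, hX2⟩, hXP⟩ := hX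
    exact ⟨⟨t.ge_antitone (by omega) _ hX1, hX2⟩, hXP⟩
  · -- Hom-vanishing
    intro A hA B hB f
    rw [hLp] at hA
    rw [hGp] at hB
    obtain ⟨⟨⟨A₁, B₁, i, j, k, hT, hA₁, hB₁⟩, _⟩, _⟩ := hA
    obtain ⟨⟨hBge1, hBgew⟩, _⟩ := hB
    have h1 : i ≫ f = 0 := my_tzero t _ 0 1 (by omega) hA₁ hBge1
    obtain ⟨g, hg⟩ := Triangle.yoneda_exact₂ _ hT f h1
    have hg0 : g = 0 := b.hom_zero hB₁ (by rw [hwe]; exact hBgew) g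
    rw [hg, hg0, comp_zero]; rfl
  · -- truncation triangles
    intro X hX
    obtain ⟨hXle, hXge⟩ := hX
    -- t-truncation triangle of X
    obtain ⟨A₀, G, hA₀, hG1, a, bb, c, hT1⟩ := t.exists_triangle X 0 1 (by omega)
    have hGle : G ∈ b.le w :=
      htau w 1 _ hT1 (by rw [show (1:ℤ) - 1 = 0 by omega]; exact hA₀) hG1 hXle
    -- baric truncation triangle of G at w-1
    obtain ⟨G₁, G₂, u, v, e, hT2, hG₁, hG₂ge'⟩ := b.exists_triangle G (w-1)
    have hG₂ge : G₂ ∈ b.ge w := by rw [hwe] at hG₂ge'; exact hG₂ge'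
    have hG₂GE : t.ge 1 G₂ := hbeta (w-1) 1 _ hT2 hG₁ hG₂ge' hG1
    have hG₁s : G₁⟦(1:ℤ)⟧ ∈ b.le w := by
      rw [← hwe]; exact b.le_mono (w-1) (b.le_shift (w-1) 1 G₁ hG₁)
    have hG₂le : G₂ ∈ b.le w := b.le_ext₂ w _ (rot_of_distTriang _ hT2) hGle hG₁s
    -- the fiber F of X ⟶ G₂
    obtain ⟨F, p, r, hT3⟩ := distinguished_cocone_triangle₁ (bb ≫ v)
    have hFle : F ∈ b.le w :=
      b.le_ext₂ w _ (inv_rot_of_distTriang _ hT3) (b.le_shift w (-1) G₂ hG₂le) hXle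
    have hFge : F ∈ b.ge w :=
      b.ge_ext₂ w _ (inv_rot_of_distTriang _ hT3) (b.ge_shift w (-1) G₂ hG₂ge) hXge
    -- key vanishing : every map from F to an object of GE 1 ∩ ge w is zero
    have key : ∀ (Z : D), t.ge 1 Z → Z ∈ b.ge w → ∀ f : F ⟶ Z, f = 0 := by
      intro Z hZ1 hZw f
      have hχ : r ≫ f⟦(1:ℤ)⟧' = 0 := by
        have h0 : bb ≫ (v ≫ r ≫ f⟦(1:ℤ)⟧') = 0 := by
          have hz : (bb ≫ v) ≫ r = 0 := comp_distTriang_mor_zero₂₃ _ hT3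
          rw [← Category.assoc, ← Category.assoc, Category.assoc bb v r, ← Category.assoc,
            hz, zero_comp]
        obtain ⟨h, hh⟩ := Triangle.yoneda_exact₃ _ hT1 (v ≫ r ≫ f⟦(1:ℤ)⟧') h0
        have hA₀s : t.le (-1) (A₀⟦(1:ℤ)⟧) := t.le_shift 0 1 (-1) (by omega) _ hA₀
        have hZs : t.ge 0 (Z⟦(1:ℤ)⟧) := t.ge_shift 1 1 0 (by omega) _ hZ1
        have hh0 : h = 0 := my_tzero t h (-1) 0 (by omega) hA₀s hZs
        have h2 : v ≫ (r ≫ f⟦(1:ℤ)⟧') = 0 := hh.trans (by rw [hh0]; exact comp_zero)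
        obtain ⟨l, hl⟩ := Triangle.yoneda_exact₃ _ hT2 (r ≫ f⟦(1:ℤ)⟧') h2
        have hl0 : l = 0 := b.hom_zero (b.le_shift (w-1) 1 G₁ hG₁)
          (by rw [hwe]; exact b.ge_shift w 1 Z hZw) l
        exact hl.trans (by rw [hl0]; exact comp_zero)
      obtain ⟨h, hh⟩ := my_yoneda_exact₁ _ hT3 f hχ
      have h3 : a ≫ h = 0 := my_tzero t _ 0 1 (by omega) hA₀ hZ1
      obtain ⟨k, hk⟩ := Triangle.yoneda_exact₂ _ hT1 h h3
      have h4 : u ≫ k = 0 := b.hom_zero hG₁ (by rw [hwe]; exact hZw) _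
      obtain ⟨l, hl⟩ := Triangle.yoneda_exact₂ _ hT2 k h4
      change G₂ ⟶ Z at l
      have hpq : p ≫ bb ≫ v = 0 := comp_distTriang_mor_zero₁₂ _ hT3
      rw [hh, hk, hl]
      change p ≫ bb ≫ v ≫ l = 0
      simp only [← Category.assoc] at hpq ⊢
      rw [hpq, zero_comp]
    -- t-truncation triangle of F
    obtain ⟨A', B', hA', hB'1, α, β, γ, hT4⟩ := t.exists_triangle F 0 1 (by omega)
    -- every map from B' to an object of GE 1 ∩ ge w is zero
    have keyB : ∀ (Z : D), t.ge 1 Z → Z ∈ b.ge w → ∀ f : B' ⟶ Z, f = 0 := by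
      intro Z hZ1 hZw f
      obtain ⟨g, hg⟩ := Triangle.yoneda_exact₃ _ hT4 f (key Z hZ1 hZw _)
      have hg0 : g = 0 := my_tzero t g (-1) 1 (by omega)
        (t.le_shift 0 1 (-1) (by omega) _ hA') hZ1
      rw [hg, hg0, comp_zero]; rfl
    -- baric truncation triangle of B' at w-1
    obtain ⟨B₁, B₂, u', v', e', hT5, hB₁, hB₂ge'⟩ := b.exists_triangle B' (w-1)
    have hB₂GE : t.ge 1 B₂ := hbeta (w-1) 1 _ hT5 hB₁ hB₂ge' hB'1
    have hB₂ge : B₂ ∈ b.ge w := by rw [hwe] at hB₂ge'; exact hB₂ge'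
    have hv' : v' = 0 := keyB B₂ hB₂GE hB₂ge v'
    obtain ⟨ρ, hρ⟩ := Triangle.yoneda_exact₃ _ hT5 (𝟙 B₂) (by
      change v' ≫ 𝟙 B₂ = 0; rw [hv', zero_comp])
    have hρ0 : ρ = 0 := b.hom_zero (b.le_shift (w-1) 1 B₁ hB₁)
      (by rw [hwe]; exact hB₂ge) ρ
    have hzB₂ : IsZero B₂ := by
      rw [IsZero.iff_id_eq_zero, hρ, hρ0, comp_zero]; rfl
    have hu' : IsIso ((Triangle.mk u' v' e').mor₁) :=
      (Triangle.isZero₃_iff_isIso₁ _ hT5).1 hzB₂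
    have hB'lew : B' ∈ b.le (w-1) := b.le_iso (@asIso _ _ _ _ ((Triangle.mk u' v' e').mor₁) hu') hB₁
    refine ⟨F, G₂, p, bb ≫ v, r, hT3, ?_, ?_⟩
    · rw [hLp]
      exact ⟨⟨⟨A', B', α, β, γ, hT4, hA', hB'lew⟩, hFle⟩, hFle, hFge⟩
    · rw [hGp]
      exact ⟨⟨hG₂GE, hG₂ge⟩, hG₂le, hG₂ge⟩
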